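/- Let N ∈ ℕ and σ₁, σ₂, σ₃ > −1 be real numbers, and define W : ℤ × ℤ → ℝ by W(x₁,x₂) = [Γ(x₁+σ₁+1)/(Γ(σ₁+1)·x₁!)] · [Γ(x₂+σ₂+1)/(Γ(σ₂+1)·x₂!)] · [Γ(N−x₁−x₂+σ₃+1)/(Γ(σ₃+1)·(N−x₁−x₂)!)] if x₁ ≥ 0, x₂ ≥ 0 and x₁+x₂ ≤ N, and W(x₁,x₂) = 0 otherwise. With the coefficients of the two-variable Hahn difference equation, A₁₁(x) = x₁(N−x₁+σ₂+σ₃+2), A₁₂(x) = −x₂(x₁+σ₁+1), A₂₁(x) = −x₁(x₂+σ₂+1), A₂₂(x) = x₂(N−x₂+σ₁+σ₃+2), B₁(x) = (N−x₁)(σ₁+1) − x₁(σ₂+σ₃+2), B₂(x) = (N−x₂)(σ₂+1) − x₂(σ₁+σ₃+2), the self-adjointness relations hold pointwise on all of ℤ × ℤ: W·B₁ = Δ₁(W·A₁₁) + Δ₂(W·A₁₂) and W·B₂ = Δ₁(W·A₂₁) + Δ₂(W·A₂₂). -/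

import Mathlib

noncomputable section

/-- Forward difference in the first variable. -/
def fd1 (u : ℤ × ℤ → ℝ) : ℤ × ℤ → ℝ := fun x => u (x.1 + 1, x.2) - u x

/-- Forward difference in the second variable. -/
def fd2 (u : ℤ × ℤ → ℝ) : ℤ × ℤ → ℝ := fun x => u (x.1, x.2 + 1) - u x

/-- One-variable Hahn weight factor. -/
def Hf (σ : ℝ) (n : ℕ) : ℝ :=
  Real.Gamma ((n : ℝ) + σ + 1) / (Real.Gamma (σ + 1) * (n.factorial : ℝ))

lemma Hf_succ (σ : ℝ) (hσ : -1 < σ) (n : ℕ) :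
    Hf σ (n + 1) * ((n : ℝ) + 1) = Hf σ n * ((n : ℝ) + σ + 1) := by
  unfold Hf
  have h0 : (n : ℝ) + σ + 1 ≠ 0 := by
    have : (0:ℝ) ≤ (n:ℝ) := Nat.cast_nonneg n
    intro h; nlinarith
  have hg : Real.Gamma (((n+1 : ℕ) : ℝ) + σ + 1)
      = ((n:ℝ) + σ + 1) * Real.Gamma ((n:ℝ) + σ + 1) := by
    rw [show ((n+1 : ℕ) : ℝ) + σ + 1 = ((n:ℝ) + σ + 1) + 1 by push_cast; ring,
      Real.Gamma_add_one h0]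
  have hΓσ : Real.Gamma (σ + 1) ≠ 0 := ne_of_gt (Real.Gamma_pos_of_pos (by linarith))
  have hf : ((n.factorial : ℕ) : ℝ) ≠ 0 := Nat.cast_ne_zero.mpr n.factorial_ne_zero
  rw [hg, Nat.factorial_succ]
  push_cast
  field_simp

lemma key1 (N : ℕ) (σ1 σ2 σ3 : ℝ) (h1 : -1 < σ1) (h2 : -1 < σ2) (h3 : -1 < σ3)
    (a b : ℕ) (hab : a + b ≤ N) :
    Hf σ1 a * Hf σ2 b * Hf σ3 (N - a - b) *
      (((N : ℝ) - (a : ℝ)) * (σ1 + 1) - (a : ℝ) * (σ2 + σ3 + 2)) =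
    ((if a + 1 + b ≤ N then Hf σ1 (a+1) * Hf σ2 b * Hf σ3 (N - (a+1) - b) else 0) *
        (((a : ℝ) + 1) * ((N : ℝ) - ((a : ℝ) + 1) + σ2 + σ3 + 2))
      - Hf σ1 a * Hf σ2 b * Hf σ3 (N - a - b) *
        ((a : ℝ) * ((N : ℝ) - (a : ℝ) + σ2 + σ3 + 2)))
    + ((if a + (b + 1) ≤ N then Hf σ1 a * Hf σ2 (b+1) * Hf σ3 (N - a - (b+1)) else 0) *
        (-((b : ℝ) + 1) * ((a : ℝ) + σ1 + 1))
      - Hf σ1 a * Hf σ2 b * Hf σ3 (N - a - b) *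
        (-(b : ℝ) * ((a : ℝ) + σ1 + 1))) := by
  obtain ⟨m, rfl⟩ : ∃ m, N = a + b + m := ⟨N - a - b, by omega⟩
  match m with
  | 0 =>
    rw [if_neg (by omega), if_neg (by omega)]
    have hc : a + b + 0 - a - b = 0 := by omega
    rw [hc]
    push_cast
    ring
  | m + 1 =>
    rw [if_pos (by omega), if_pos (by omega)]
    have e0 : a + b + (m+1) - a - b = m + 1 := by omega
    have e1 : a + b + (m+1) - (a+1) - b = m := by omega
    have e2 : a + b + (m+1) - a - (b+1) = m := by omega
    rw [e0, e1, e2]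
    have ha : (a : ℝ) + 1 ≠ 0 := by positivity
    have hb : (b : ℝ) + 1 ≠ 0 := by positivity
    have hm : (m : ℝ) + σ3 + 1 ≠ 0 := by
      have : (0:ℝ) ≤ (m:ℝ) := Nat.cast_nonneg m
      intro h; nlinarith
    have r1 : Hf σ1 (a+1) = Hf σ1 a * ((a:ℝ) + σ1 + 1) / ((a:ℝ) + 1) :=
      (eq_div_iff ha).mpr (Hf_succ σ1 h1 a)
    have r2 : Hf σ2 (b+1) = Hf σ2 b * ((b:ℝ) + σ2 + 1) / ((b:ℝ) + 1) :=
      (eq_div_iff hb).mpr (Hf_succ σ2 h2 b)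
    have r3 : Hf σ3 m = Hf σ3 (m+1) * ((m:ℝ) + 1) / ((m:ℝ) + σ3 + 1) := by
      rw [eq_div_iff hm]; exact (Hf_succ σ3 h3 m).symm
    rw [r1, r2, r3]
    push_cast
    field_simp
    ring

lemma key2 (N : ℕ) (σ1 σ2 σ3 : ℝ) (h1 : -1 < σ1) (h2 : -1 < σ2) (h3 : -1 < σ3)
    (a b : ℕ) (hab : a + b ≤ N) :
    Hf σ1 a * Hf σ2 b * Hf σ3 (N - a - b) *
      (((N : ℝ) - (b : ℝ)) * (σ2 + 1) - (b : ℝ) * (σ1 + σ3 + 2)) =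
    ((if a + 1 + b ≤ N then Hf σ1 (a+1) * Hf σ2 b * Hf σ3 (N - (a+1) - b) else 0) *
        (-((a : ℝ) + 1) * ((b : ℝ) + σ2 + 1))
      - Hf σ1 a * Hf σ2 b * Hf σ3 (N - a - b) *
        (-(a : ℝ) * ((b : ℝ) + σ2 + 1)))
    + ((if a + (b + 1) ≤ N then Hf σ1 a * Hf σ2 (b+1) * Hf σ3 (N - a - (b+1)) else 0) *
        (((b : ℝ) + 1) * ((N : ℝ) - ((b : ℝ) + 1) + σ1 + σ3 + 2))
      - Hf σ1 a * Hf σ2 b * Hf σ3 (N - a - b) *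
        ((b : ℝ) * ((N : ℝ) - (b : ℝ) + σ1 + σ3 + 2))) := by
  obtain ⟨m, rfl⟩ : ∃ m, N = a + b + m := ⟨N - a - b, by omega⟩
  match m with
  | 0 =>
    rw [if_neg (by omega), if_neg (by omega)]
    have hc : a + b + 0 - a - b = 0 := by omega
    rw [hc]
    push_cast
    ring
  | m + 1 =>
    rw [if_pos (by omega), if_pos (by omega)]
    have e0 : a + b + (m+1) - a - b = m + 1 := by omega
    have e1 : a + b + (m+1) - (a+1) - b = m := by omega
    have e2 : a + b + (m+1) - a - (b+1) = m := by omega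
    rw [e0, e1, e2]
    have ha : (a : ℝ) + 1 ≠ 0 := by positivity
    have hb : (b : ℝ) + 1 ≠ 0 := by positivity
    have hm : (m : ℝ) + σ3 + 1 ≠ 0 := by
      have : (0:ℝ) ≤ (m:ℝ) := Nat.cast_nonneg m
      intro h; nlinarith
    have r1 : Hf σ1 (a+1) = Hf σ1 a * ((a:ℝ) + σ1 + 1) / ((a:ℝ) + 1) :=
      (eq_div_iff ha).mpr (Hf_succ σ1 h1 a)
    have r2 : Hf σ2 (b+1) = Hf σ2 b * ((b:ℝ) + σ2 + 1) / ((b:ℝ) + 1) :=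
      (eq_div_iff hb).mpr (Hf_succ σ2 h2 b)
    have r3 : Hf σ3 m = Hf σ3 (m+1) * ((m:ℝ) + 1) / ((m:ℝ) + σ3 + 1) := by
      rw [eq_div_iff hm]; exact (Hf_succ σ3 h3 m).symm
    rw [r1, r2, r3]
    push_cast
    field_simp
    ring

lemma Wnat (N : ℕ) (σ1 σ2 σ3 : ℝ) (a b : ℕ) :
    (if 0 ≤ (a : ℤ) ∧ 0 ≤ (b : ℤ) ∧ (a : ℤ) + (b : ℤ) ≤ (N : ℤ) then
      (Real.Gamma (((a : ℤ) : ℝ) + σ1 + 1) /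
          (Real.Gamma (σ1 + 1) * ((a : ℤ).toNat.factorial : ℝ))) *
        (Real.Gamma (((b : ℤ) : ℝ) + σ2 + 1) /
          (Real.Gamma (σ2 + 1) * ((b : ℤ).toNat.factorial : ℝ))) *
        (Real.Gamma ((N : ℝ) - ((a : ℤ) : ℝ) - ((b : ℤ) : ℝ) + σ3 + 1) /
          (Real.Gamma (σ3 + 1) * (((N - (a : ℤ).toNat - (b : ℤ).toNat).factorial : ℝ))))
      else 0)
      = if a + b ≤ N then Hf σ1 a * Hf σ2 b * Hf σ3 (N - a - b) else 0 := by
  by_cases hab : a + b ≤ N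
  · rw [if_pos hab, if_pos ⟨Int.ofNat_nonneg a, Int.ofNat_nonneg b, by exact_mod_cast hab⟩]
    unfold Hf
    rw [Int.toNat_natCast, Int.toNat_natCast]
    have hc : ((N - a - b : ℕ) : ℝ) = (N : ℝ) - (a : ℝ) - (b : ℝ) := by
      push_cast [Nat.cast_sub (by omega : a ≤ N), Nat.cast_sub (by omega : b ≤ N - a)]
      ring
    rw [hc]
    push_cast
    ring
  · rw [if_neg hab, if_neg (by omega)]

/-- the Hahn weight
`W(x) = Γ(x₁+σ₁+1)/(Γ(σ₁+1)x₁!) · Γ(x₂+σ₂+1)/(Γ(σ₂+1)x₂!) ·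
Γ(N−x₁−x₂+σ₃+1)/(Γ(σ₃+1)(N−x₁−x₂)!)` on the triangle `{x ∈ ℕ² : x₁+x₂ ≤ N}`
(extended by `0`) makes `W·𝒟` self-adjoint for the two-variable Hahn difference
operator. -/
theorem stmt18 (N : ℕ) (σ1 σ2 σ3 : ℝ)
    (hσ1 : -1 < σ1) (hσ2 : -1 < σ2) (hσ3 : -1 < σ3)
    (W : ℤ × ℤ → ℝ)
    (hW : W = fun x => if 0 ≤ x.1 ∧ 0 ≤ x.2 ∧ x.1 + x.2 ≤ (N : ℤ) then
      (Real.Gamma ((x.1 : ℝ) + σ1 + 1) / (Real.Gamma (σ1 + 1) * (x.1.toNat.factorial : ℝ))) *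
        (Real.Gamma ((x.2 : ℝ) + σ2 + 1) / (Real.Gamma (σ2 + 1) * (x.2.toNat.factorial : ℝ))) *
        (Real.Gamma ((N : ℝ) - (x.1 : ℝ) - (x.2 : ℝ) + σ3 + 1) /
          (Real.Gamma (σ3 + 1) * (((N - x.1.toNat - x.2.toNat).factorial : ℝ))))
      else 0) :
    (∀ x : ℤ × ℤ,
      W x * (((N : ℝ) - (x.1 : ℝ)) * (σ1 + 1) - (x.1 : ℝ) * (σ2 + σ3 + 2)) =
        fd1 (fun y => W y * ((y.1 : ℝ) * ((N : ℝ) - (y.1 : ℝ) + σ2 + σ3 + 2))) x +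
          fd2 (fun y => W y * (-(y.2 : ℝ) * ((y.1 : ℝ) + σ1 + 1))) x) ∧
    (∀ x : ℤ × ℤ,
      W x * (((N : ℝ) - (x.2 : ℝ)) * (σ2 + 1) - (x.2 : ℝ) * (σ1 + σ3 + 2)) =
        fd1 (fun y => W y * (-(y.1 : ℝ) * ((y.2 : ℝ) + σ2 + 1))) x +
          fd2 (fun y => W y * ((y.2 : ℝ) * ((N : ℝ) - (y.2 : ℝ) + σ1 + σ3 + 2))) x) := by
  subst hW
  constructor
  · rintro ⟨x1, x2⟩
    simp only [fd1, fd2]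
    by_cases hx1 : 0 ≤ x1
    · by_cases hx2 : 0 ≤ x2
      · by_cases hxN : x1 + x2 ≤ (N : ℤ)
        · obtain ⟨a, rfl⟩ := Int.eq_ofNat_of_zero_le hx1
          obtain ⟨b, rfl⟩ := Int.eq_ofNat_of_zero_le hx2
          have hab : a + b ≤ N := by exact_mod_cast hxN
          rw [show (a : ℤ) + 1 = ((a + 1 : ℕ) : ℤ) by push_cast; ring,
              show (b : ℤ) + 1 = ((b + 1 : ℕ) : ℤ) by push_cast; ring,
              Wnat N σ1 σ2 σ3 (a+1) b, Wnat N σ1 σ2 σ3 a (b+1), Wnat N σ1 σ2 σ3 a b,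
              if_pos hab]
          have hk := key1 N σ1 σ2 σ3 hσ1 hσ2 hσ3 a b hab
          push_cast at hk ⊢
          linear_combination hk
        · have c0 : ¬(0 ≤ x1 ∧ 0 ≤ x2 ∧ x1 + x2 ≤ (N : ℤ)) := by omega
          have c1 : ¬(0 ≤ x1 + 1 ∧ 0 ≤ x2 ∧ x1 + 1 + x2 ≤ (N : ℤ)) := by omega
          have c2 : ¬(0 ≤ x1 ∧ 0 ≤ x2 + 1 ∧ x1 + (x2 + 1) ≤ (N : ℤ)) := by omega
          rw [if_neg c0, if_neg c1, if_neg c2]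
          ring
      · have c0 : ¬(0 ≤ x1 ∧ 0 ≤ x2 ∧ x1 + x2 ≤ (N : ℤ)) := by omega
        have c1 : ¬(0 ≤ x1 + 1 ∧ 0 ≤ x2 ∧ x1 + 1 + x2 ≤ (N : ℤ)) := by omega
        rw [if_neg c0, if_neg c1]
        by_cases h2 : x2 = -1
        · subst h2
          push_cast
          ring
        · have c2 : ¬(0 ≤ x1 ∧ 0 ≤ x2 + 1 ∧ x1 + (x2 + 1) ≤ (N : ℤ)) := by omega
          rw [if_neg c2]
          ring
    · have c0 : ¬(0 ≤ x1 ∧ 0 ≤ x2 ∧ x1 + x2 ≤ (N : ℤ)) := by omega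
      have c2 : ¬(0 ≤ x1 ∧ 0 ≤ x2 + 1 ∧ x1 + (x2 + 1) ≤ (N : ℤ)) := by omega
      rw [if_neg c0, if_neg c2]
      by_cases h1 : x1 = -1
      · subst h1
        push_cast
        ring
      · have c1 : ¬(0 ≤ x1 + 1 ∧ 0 ≤ x2 ∧ x1 + 1 + x2 ≤ (N : ℤ)) := by omega
        rw [if_neg c1]
        ring
  · rintro ⟨x1, x2⟩
    simp only [fd1, fd2]
    by_cases hx1 : 0 ≤ x1
    · by_cases hx2 : 0 ≤ x2
      · by_cases hxN : x1 + x2 ≤ (N : ℤ)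
        · obtain ⟨a, rfl⟩ := Int.eq_ofNat_of_zero_le hx1
          obtain ⟨b, rfl⟩ := Int.eq_ofNat_of_zero_le hx2
          have hab : a + b ≤ N := by exact_mod_cast hxN
          rw [show (a : ℤ) + 1 = ((a + 1 : ℕ) : ℤ) by push_cast; ring,
              show (b : ℤ) + 1 = ((b + 1 : ℕ) : ℤ) by push_cast; ring,
              Wnat N σ1 σ2 σ3 (a+1) b, Wnat N σ1 σ2 σ3 a (b+1), Wnat N σ1 σ2 σ3 a b,
              if_pos hab]
          have hk := key2 N σ1 σ2 σ3 hσ1 hσ2 hσ3 a b hab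
          push_cast at hk ⊢
          linear_combination hk
        · have c0 : ¬(0 ≤ x1 ∧ 0 ≤ x2 ∧ x1 + x2 ≤ (N : ℤ)) := by omega
          have c1 : ¬(0 ≤ x1 + 1 ∧ 0 ≤ x2 ∧ x1 + 1 + x2 ≤ (N : ℤ)) := by omega
          have c2 : ¬(0 ≤ x1 ∧ 0 ≤ x2 + 1 ∧ x1 + (x2 + 1) ≤ (N : ℤ)) := by omega
          rw [if_neg c0, if_neg c1, if_neg c2]
          ring
      · have c0 : ¬(0 ≤ x1 ∧ 0 ≤ x2 ∧ x1 + x2 ≤ (N : ℤ)) := by omega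
        have c1 : ¬(0 ≤ x1 + 1 ∧ 0 ≤ x2 ∧ x1 + 1 + x2 ≤ (N : ℤ)) := by omega
        rw [if_neg c0, if_neg c1]
        by_cases h2 : x2 = -1
        · subst h2
          push_cast
          ring
        · have c2 : ¬(0 ≤ x1 ∧ 0 ≤ x2 + 1 ∧ x1 + (x2 + 1) ≤ (N : ℤ)) := by omega
          rw [if_neg c2]
          ring
    · have c0 : ¬(0 ≤ x1 ∧ 0 ≤ x2 ∧ x1 + x2 ≤ (N : ℤ)) := by omega
      have c2 : ¬(0 ≤ x1 ∧ 0 ≤ x2 + 1 ∧ x1 + (x2 + 1) ≤ (N : ℤ)) := by omega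
      rw [if_neg c0, if_neg c2]
      by_cases h1 : x1 = -1
      · subst h1
        push_cast
        ring
      · have c1 : ¬(0 ≤ x1 + 1 ∧ 0 ≤ x2 ∧ x1 + 1 + x2 ≤ (N : ℤ)) := by omega
        rw [if_neg c1]
        ring
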